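/- Let N be a CCI-envelope of a CCI X of size k ≥ 4, and let (J; X₁, X₂) and (J'; X₁', X₂') be hyperplane-partitions with J ≠ J'. If the common refinement {X_i ∩ X_j' : nonempty} has exactly 3 blocks, then every block has size at least 2. -/

import Mathlib

open Set

namespace Matroid

variable {α : Type*}

/-- A circuit: a minimal dependent set. -/
def IsCircuit₀ (M : Matroid α) (C : Set α) : Prop :=
  C ⊆ M.E ∧ ¬ M.Indep C ∧ ∀ D, D ⊂ C → M.Indep D

/-- A cocircuit: a circuit of the dual matroid. -/
def IsCocircuit₀ (M : Matroid α) (C : Set α) : Prop :=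
  M✶.IsCircuit₀ C

/-- A circuit-cocircuit intersection (CCI). -/
def IsCCI (M : Matroid α) (X : Set α) : Prop :=
  ∃ C K, M.IsCircuit₀ C ∧ M.IsCocircuit₀ K ∧ X = C ∩ K

/-- A hyperplane: a maximal proper flat. -/
def IsHyperplane (M : Matroid α) (H : Set α) : Prop :=
  M.IsFlat H ∧ H ≠ M.E ∧ ∀ F, M.IsFlat F → H ⊂ F → F = M.E

/-- The rank of a set: the largest size of an independent subset. -/
noncomputable def rk (M : Matroid α) (A : Set α) : ℕ :=
  sSup {n | ∃ I, I ⊆ A ∧ M.Indep I ∧ I.ncard = n}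

/-- The rank of a matroid. -/
noncomputable def rank (M : Matroid α) : ℕ := M.rk M.E

/-- Deletion of a set from a matroid. -/
def del (M : Matroid α) (D : Set α) : Matroid α := M.restrict (M.E \ D)

/-- Contraction of a set in a matroid. -/
def con (M : Matroid α) (C : Set α) : Matroid α := (M✶.restrict (M.E \ C))✶

/-- `N` is a minor of `M` if it is obtained by a contraction followed by a deletion. -/
def IsMinor₀ (N M : Matroid α) : Prop := ∃ C D, N = (M.con C).del D

end Matroid

open Matroid

namespace CCIAux

variable {α : Type*}

lemma rank_eq_ncard_base {M : Matroid α} {B : Set α} (hfin : M.E.Finite) (hB : M.IsBase B) :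
    M.rank = B.ncard := by
  have hub : ∀ n ∈ {n | ∃ I, I ⊆ M.E ∧ M.Indep I ∧ I.ncard = n}, n ≤ B.ncard := by
    rintro n ⟨I, hIE, hI, rfl⟩
    obtain ⟨B', hB', hIB'⟩ := hI.exists_isBase_superset
    exact (Set.ncard_le_ncard hIB' (hfin.subset hB'.subset_ground)).trans
      (hB'.ncard_eq_ncard_of_isBase hB).le
  have hmem : B.ncard ∈ {n | ∃ I, I ⊆ M.E ∧ M.Indep I ∧ I.ncard = n} :=
    ⟨B, hB.subset_ground, hB.indep, rfl⟩
  exact le_antisymm (csSup_le ⟨_, hmem⟩ hub) (le_csSup ⟨_, hub⟩ hmem)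

lemma base_of_indep_ncard {M : Matroid α} {I : Set α} (hfin : M.E.Finite)
    (hI : M.Indep I) (hcard : I.ncard = M.rank) : M.IsBase I := by
  obtain ⟨B, hB, hIB⟩ := hI.exists_isBase_superset
  have h1 : B.ncard ≤ I.ncard := by rw [hcard, rank_eq_ncard_base hfin hB]
  have := Set.eq_of_subset_of_ncard_le hIB h1 (hfin.subset hB.subset_ground)
  rwa [this]

/-- Any independent subset of a hyperplane has at most `k - 2` elements. -/
lemma hypbound {N : Matroid α} {k : ℕ} (hfin : N.E.Finite) (hr : N.rank = k - 1) (hk : 4 ≤ k)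
    {H I : Set α} (hH : N.IsHyperplane H) (hI : N.Indep I) (hIH : I ⊆ H) :
    I.ncard ≤ k - 2 := by
  by_contra hlt
  push_neg at hlt
  obtain ⟨I₀, hI₀I, hI₀card⟩ := Set.exists_subset_card_eq (s := I) (n := k - 1) (by omega)
  have hbase : N.IsBase I₀ := base_of_indep_ncard hfin (hI.subset hI₀I) (by rw [hI₀card, hr])
  have hEH : N.E ⊆ H := by
    rw [← hbase.closure_eq]
    exact (N.closure_subset_closure (hI₀I.trans hIH)).trans hH.1.closure.subset
  exact hH.2.1 (subset_antisymm hH.1.subset_ground hEH)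

/-- An independent subset of a hyperplane with `k - 2` elements spans the hyperplane. -/
lemma hyp_eq_closure {N : Matroid α} {k : ℕ} (hfin : N.E.Finite) (hr : N.rank = k - 1)
    (hk : 4 ≤ k) {H I : Set α} (hH : N.IsHyperplane H) (hI : N.Indep I) (hIH : I ⊆ H)
    (hcard : I.ncard = k - 2) : H = N.closure I := by
  have hIfin : I.Finite := hfin.subset hI.subset_ground
  have hbasis : N.IsBasis I H := by
    refine hI.isBasis_of_forall_insert hIH ?_
    rintro e ⟨heH, heI⟩
    by_contra hnd
    have hins : N.Indep (insert e I) := by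
      refine Matroid.indep_of_not_dep hnd (insert_subset (hH.1.subset_ground heH)
        (hIH.trans hH.1.subset_ground))
    have hcard' : (insert e I).ncard = k - 1 := by
      rw [Set.ncard_insert_of_notMem heI hIfin, hcard]; omega
    have hbase : N.IsBase (insert e I) := base_of_indep_ncard hfin hins (by rw [hcard', hr])
    have hEH : N.E ⊆ H := by
      rw [← hbase.closure_eq]
      exact (N.closure_subset_closure (insert_subset heH hIH)).trans hH.1.closure.subset
    exact hH.2.1 (subset_antisymm hH.1.subset_ground hEH)
  exact (hbasis.closure_eq_closure.trans hH.1.closure).symm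

lemma size2 (N : Matroid α) (k : ℕ) (hk : 4 ≤ k)
    (hE : N.E.ncard = 2 * k - 2) (hr : N.rank = k - 1)
    (X : Set α) (hXcard : X.ncard = k) (hXc : N.IsCircuit₀ X)
    (J X₁ X₂ : Set α) (hJ : J ⊆ N.E \ X) (hJcard : J.ncard = k - 3)
    (hX₁₂ : X₁ ∪ X₂ = X) (hdisj : Disjoint X₁ X₂)
    (hH₁ : N.IsHyperplane (J ∪ X₁)) (hH₂ : N.IsHyperplane (J ∪ X₂)) :
    2 ≤ X₂.ncard := by
  have hfin : N.E.Finite := Set.finite_of_ncard_ne_zero (by omega)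
  have hXE : X ⊆ N.E := hXc.1
  have hXfin : X.Finite := hfin.subset hXE
  have hX2X : X₂ ⊆ X := hX₁₂ ▸ subset_union_right
  have hX1X : X₁ ⊆ X := hX₁₂ ▸ subset_union_left
  have hX2fin : X₂.Finite := hXfin.subset hX2X
  have hJX : Disjoint J X := (subset_diff.mp hJ).2
  -- X₂ is nonempty
  have hne : X₂.Nonempty := by
    by_contra h
    rw [Set.not_nonempty_iff_eq_empty] at h
    have hX1 : X₁ = X := by rw [← hX₁₂, h, union_empty]
    obtain ⟨x, hx⟩ : X.Nonempty := Set.nonempty_of_ncard_ne_zero (by omega)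
    have hss : J ∪ X₂ ⊂ J ∪ X₁ := by
      rw [h, union_empty, hX1]
      refine ssubset_of_subset_not_subset subset_union_left (fun hsub => ?_)
      exact (Set.disjoint_left.mp hJX (hsub (mem_union_right _ hx))) hx
    have hEeq : J ∪ X₁ = N.E := hH₂.2.2 _ hH₁.1 hss
    have hle : (J ∪ X₁).ncard ≤ J.ncard + X₁.ncard := Set.ncard_union_le _ _
    rw [hEeq, hE, hJcard, hX1, hXcard] at hle
    omega
  -- X₂ is not a singleton
  have hns : X₂.ncard ≠ 1 := by
    intro h1
    obtain ⟨e, he⟩ := Set.ncard_eq_one.mp h1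
    have heX : e ∈ X := hX2X (he ▸ rfl)
    have hind : N.Indep (X \ {e}) := hXc.2.2 _ (Set.sdiff_singleton_ssubset.mpr heX)
    have hbase : N.IsBase (X \ {e}) := base_of_indep_ncard hfin hind
      (by rw [hr, Set.ncard_diff_singleton_of_mem heX, hXcard])
    have hsub : X \ {e} ⊆ J ∪ X₁ := by
      rintro x ⟨hxX, hxe⟩
      rcases (hX₁₂ ▸ hxX : x ∈ X₁ ∪ X₂) with h | h
      · exact mem_union_right J h
      · exact absurd (he ▸ h) hxe
    have hEH : N.E ⊆ J ∪ X₁ := by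
      rw [← hbase.closure_eq]
      exact (N.closure_subset_closure hsub).trans hH₁.1.closure.subset
    exact hH₁.2.1 (subset_antisymm hH₁.1.subset_ground hEH)
  have : X₂.ncard ≠ 0 := fun h0 => hne.ne_empty ((Set.ncard_eq_zero hX2fin).mp h0)
  omega

lemma third (N : Matroid α) (k : ℕ) (hk : 4 ≤ k)
    (hE : N.E.ncard = 2 * k - 2) (hr : N.rank = k - 1) (hr' : N✶.rank = k - 1)
    (X : Set α) (hXcard : X.ncard = k)
    (hXc : N.IsCircuit₀ X) (hXcc : N.IsCocircuit₀ X)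
    (J X₁ X₂ : Set α) (hJ : J ⊆ N.E \ X) (hJcard : J.ncard = k - 3)
    (hX₁₂ : X₁ ∪ X₂ = X) (hdisj : Disjoint X₁ X₂)
    (hH₁ : N.IsHyperplane (J ∪ X₁)) (hH₂ : N.IsHyperplane (J ∪ X₂))
    (J' X₁' X₂' : Set α) (hJ' : J' ⊆ N.E \ X) (hJ'card : J'.ncard = k - 3)
    (hX₁₂' : X₁' ∪ X₂' = X) (hdisj' : Disjoint X₁' X₂')
    (hH₁' : N.IsHyperplane (J' ∪ X₁')) (hH₂' : N.IsHyperplane (J' ∪ X₂'))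
    (hJJ' : J ≠ J') (hss : X₂ ∩ X₂' = ∅) (f : α) (hf : X₁ ∩ X₁' = {f}) : False := by
  have hfin : N.E.Finite := Set.finite_of_ncard_ne_zero (by omega)
  have hXE : X ⊆ N.E := hXc.1
  have hXfin : X.Finite := hfin.subset hXE
  have hX2X : X₂ ⊆ X := hX₁₂ ▸ subset_union_right
  have hX1X : X₁ ⊆ X := hX₁₂ ▸ subset_union_left
  have hX2'X : X₂' ⊆ X := hX₁₂' ▸ subset_union_right
  have hX1'X : X₁' ⊆ X := hX₁₂' ▸ subset_union_left
  have hfmem : f ∈ X₁ ∩ X₁' := by rw [hf]; exact rfl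
  have hfX : f ∈ X := hX1X hfmem.1
  have hJY : J ⊆ N.E \ X := hJ
  have hJ'Y : J' ⊆ N.E \ X := hJ'
  have hJE : J ⊆ N.E := (subset_diff.mp hJ).1
  have hJ'E : J' ⊆ N.E := (subset_diff.mp hJ').1
  have hJX : Disjoint J X := (subset_diff.mp hJ).2
  have hJ'X : Disjoint J' X := (subset_diff.mp hJ').2
  have hYfin : (N.E \ X).Finite := hfin.diff
  have hYcard : (N.E \ X).ncard = k - 2 := by
    rw [Set.ncard_diff hXE hXfin, hE, hXcard]; omega
  have hJfin : J.Finite := hYfin.subset hJY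
  have hJ'fin : J'.Finite := hYfin.subset hJ'Y
  -- J ∪ J' = N.E \ X
  have hJne : ¬ J' ⊆ J := fun h =>
    hJJ' (Set.eq_of_subset_of_ncard_le h (by rw [hJcard, hJ'card]) hJfin).symm
  have hJ'ne : ¬ J ⊆ J' := fun h =>
    hJJ' (Set.eq_of_subset_of_ncard_le h (by rw [hJcard, hJ'card]) hJ'fin)
  obtain ⟨y, hyJ', hyJ⟩ := Set.not_subset.mp hJne
  obtain ⟨y', hy'J, hy'J'⟩ := Set.not_subset.mp hJ'ne
  have hJun : J ∪ J' = N.E \ X := by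
    have hsub : J ∪ J' ⊆ N.E \ X := union_subset hJY hJ'Y
    have hlt : J.ncard < (J ∪ J').ncard := by
      refine Set.ncard_lt_ncard ?_ (hYfin.subset hsub)
      exact ssubset_of_subset_not_subset subset_union_left
        (fun h => hyJ (h (mem_union_right _ hyJ')))
    refine Set.eq_of_subset_of_ncard_le hsub (by omega) hYfin
  have hWcard : (J ∩ J').ncard = k - 4 := by
    have := Set.ncard_union_add_ncard_inter J J' hJfin hJ'fin
    rw [hJun, hYcard, hJcard, hJ'card] at this
    omega
  -- the key bases
  have hbXf : N.IsBase (X \ {f}) := by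
    refine base_of_indep_ncard hfin (hXc.2.2 _ (Set.sdiff_singleton_ssubset.mpr hfX)) ?_
    rw [hr, Set.ncard_diff_singleton_of_mem hfX, hXcard]
  have hbYf : N.IsBase ((N.E \ X) ∪ {f}) := by
    have hdfin : N✶.E.Finite := hfin
    have hdind : N✶.Indep (X \ {f}) := hXcc.2.2 _ (Set.sdiff_singleton_ssubset.mpr hfX)
    have hdbase : N✶.IsBase (X \ {f}) := base_of_indep_ncard hdfin hdind
      (by rw [hr', Set.ncard_diff_singleton_of_mem hfX, hXcard])
    have hcompl := hdbase.compl_isBase_of_dual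
    have heq : N.E \ (X \ {f}) = (N.E \ X) ∪ {f} := by
      rw [Set.diff_diff_right]
      congr 1
      exact inter_eq_self_of_subset_right (singleton_subset_iff.mpr (hXE hfX))
    rwa [heq] at hcompl
  have hWY : J ∩ J' ⊆ N.E \ X := inter_subset_left.trans hJY
  have hWindep : N.Indep (J ∩ J') := hbYf.indep.subset (hWY.trans subset_union_left)
  have hX₂X₁' : X₂ ⊆ X₁' := by
    intro x hx
    rcases (hX₁₂' ▸ hX2X hx : x ∈ X₁' ∪ X₂') with h | h
    · exact h
    · exact absurd (mem_inter hx h) (by rw [hss]; exact notMem_empty x)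
  have hX₂'X₁ : X₂' ⊆ X₁ := by
    intro x hx
    rcases (hX₁₂ ▸ hX2'X hx : x ∈ X₁ ∪ X₂) with h | h
    · exact h
    · exact absurd (mem_inter h hx) (by rw [hss]; exact notMem_empty x)
  -- key bound: independent subsets of (J ∩ J') ∪ X₂ have at most k - 3 elements
  have keyB : ∀ I, N.Indep I → I ⊆ (J ∩ J') ∪ X₂ → I.ncard ≤ k - 3 := by
    intro I hI hIsub
    have hIH₂ : I ⊆ J ∪ X₂ := hIsub.trans (union_subset_union_left _ inter_subset_left)
    have hIH₁' : I ⊆ J' ∪ X₁' := hIsub.trans (union_subset_union inter_subset_right hX₂X₁')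
    by_contra h
    push_neg at h
    have hb : I.ncard ≤ k - 2 := hypbound hfin hr hk hH₂ hI hIH₂
    have hcard : I.ncard = k - 2 := by omega
    have e1 : J ∪ X₂ = N.closure I := hyp_eq_closure hfin hr hk hH₂ hI hIH₂ hcard
    have e2 : J' ∪ X₁' = N.closure I := hyp_eq_closure hfin hr hk hH₁' hI hIH₁' hcard
    have hy1 : y ∈ J ∪ X₂ := by rw [e1, ← e2]; exact mem_union_left _ hyJ'
    rcases hy1 with h | h
    · exact hyJ h
    · exact (hJ'Y hyJ').2 (hX2X h)
  have keyB' : ∀ I, N.Indep I → I ⊆ (J ∩ J') ∪ X₂' → I.ncard ≤ k - 3 := by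
    intro I hI hIsub
    have hIH₂' : I ⊆ J' ∪ X₂' := hIsub.trans (union_subset_union_left _ inter_subset_right)
    have hIH₁ : I ⊆ J ∪ X₁ := hIsub.trans (union_subset_union inter_subset_left hX₂'X₁)
    by_contra h
    push_neg at h
    have hb : I.ncard ≤ k - 2 := hypbound hfin hr hk hH₂' hI hIH₂'
    have hcard : I.ncard = k - 2 := by omega
    have e1 : J' ∪ X₂' = N.closure I := hyp_eq_closure hfin hr hk hH₂' hI hIH₂' hcard
    have e2 : J ∪ X₁ = N.closure I := hyp_eq_closure hfin hr hk hH₁ hI hIH₁ hcard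
    have hy1 : y' ∈ J' ∪ X₂' := by rw [e1, ← e2]; exact mem_union_left _ hy'J
    rcases hy1 with h | h
    · exact hy'J' h
    · exact (hJY hy'J).2 (hX2'X h)
  -- X \ {f} = X₂ ∪ X₂'
  have hXdiff : X \ {f} = X₂ ∪ X₂' := by
    ext x
    constructor
    · rintro ⟨hxX, hxf⟩
      rcases (hX₁₂ ▸ hxX : x ∈ X₁ ∪ X₂) with h | h
      · rcases (hX₁₂' ▸ hxX : x ∈ X₁' ∪ X₂') with h' | h'
        · exact absurd (show x ∈ ({f} : Set α) by rw [← hf]; exact mem_inter h h') hxf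
        · exact mem_union_right _ h'
      · exact mem_union_left _ h
    · rintro (h | h)
      · exact ⟨hX2X h, fun hc => (Set.disjoint_left.mp hdisj hfmem.1)
          (mem_singleton_iff.mp hc ▸ h)⟩
      · exact ⟨hX2'X h, fun hc => (Set.disjoint_left.mp hdisj' hfmem.2)
          (mem_singleton_iff.mp hc ▸ h)⟩
  -- build a base of N inside (J ∩ J') ∪ (X₂ ∪ X₂') containing J ∩ J'
  have hUE : (J ∩ J') ∪ (X₂ ∪ X₂') ⊆ N.E :=
    union_subset (hWY.trans diff_subset) (union_subset (hX2X.trans hXE) (hX2'X.trans hXE))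
  obtain ⟨I, hIb, hWI⟩ := hWindep.subset_isBasis_of_subset subset_union_left hUE
  have hIbase : N.IsBase I :=
    hbXf.isBase_of_isBasis_superset (by rw [hXdiff]; exact subset_union_right) hIb
  have hIcard : I.ncard = k - 1 := by
    have := rank_eq_ncard_base hfin hIbase
    omega
  have hIU : I ⊆ (J ∩ J') ∪ (X₂ ∪ X₂') := hIb.subset
  have hIfin : I.Finite := hfin.subset hIbase.subset_ground
  have hIA : (I ∩ ((J ∩ J') ∪ X₂)).ncard ≤ k - 3 :=
    keyB _ (hIbase.indep.inter_right _) inter_subset_right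
  have hIB : (I ∩ ((J ∩ J') ∪ X₂')).ncard ≤ k - 3 :=
    keyB' _ (hIbase.indep.inter_right _) inter_subset_right
  have hunion : (I ∩ ((J ∩ J') ∪ X₂)) ∪ (I ∩ ((J ∩ J') ∪ X₂')) = I := by
    rw [← Set.inter_union_distrib_left]
    refine inter_eq_self_of_subset_left (hIU.trans fun x hx => ?_)
    rcases hx with h | h | h
    · exact mem_union_left _ (mem_union_left _ h)
    · exact mem_union_left _ (mem_union_right _ h)
    · exact mem_union_right _ (mem_union_right _ h)
  have hinter : (I ∩ ((J ∩ J') ∪ X₂)) ∩ (I ∩ ((J ∩ J') ∪ X₂')) = J ∩ J' := by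
    rw [Set.inter_inter_inter_comm, inter_self, ← Set.union_inter_distrib_left, hss,
      union_empty]
    exact inter_eq_self_of_subset_right hWI
  have hcount := Set.ncard_union_add_ncard_inter (I ∩ ((J ∩ J') ∪ X₂))
    (I ∩ ((J ∩ J') ∪ X₂')) (hIfin.subset inter_subset_left) (hIfin.subset inter_subset_left)
  rw [hunion, hinter, hIcard, hWcard] at hcount
  omega

lemma four_blocks {X₁ X₂ X₁' X₂' : Set α}
    (hdisj : Disjoint X₁ X₂) (hdisj' : Disjoint X₁' X₂')
    (h3 : {Z : Set α | Z.Nonempty ∧ ∃ A ∈ ({X₁, X₂} : Set (Set α)),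
            ∃ B ∈ ({X₁', X₂'} : Set (Set α)), Z = A ∩ B}.ncard = 3)
    (h11 : (X₁ ∩ X₁').Nonempty) (h12 : (X₁ ∩ X₂').Nonempty)
    (h21 : (X₂ ∩ X₁').Nonempty) (h22 : (X₂ ∩ X₂').Nonempty) : False := by
  set S := {Z : Set α | Z.Nonempty ∧ ∃ A ∈ ({X₁, X₂} : Set (Set α)),
            ∃ B ∈ ({X₁', X₂'} : Set (Set α)), Z = A ∩ B} with hS
  have hm1 : X₁ ∈ ({X₁, X₂} : Set (Set α)) := mem_insert _ _
  have hm2 : X₂ ∈ ({X₁, X₂} : Set (Set α)) := mem_insert_of_mem _ rfl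
  have hm1' : X₁' ∈ ({X₁', X₂'} : Set (Set α)) := mem_insert _ _
  have hm2' : X₂' ∈ ({X₁', X₂'} : Set (Set α)) := mem_insert_of_mem _ rfl
  have hne : ∀ {P Q R T : Set α}, (P ∩ Q).Nonempty → Disjoint Q T → P ∩ Q ≠ R ∩ T := by
    rintro P Q R T ⟨x, hx⟩ hd heq
    exact Set.disjoint_left.mp hd hx.2 (heq ▸ hx).2
  have hne' : ∀ {P Q R T : Set α}, (P ∩ Q).Nonempty → Disjoint P R → P ∩ Q ≠ R ∩ T := by
    rintro P Q R T ⟨x, hx⟩ hd heq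
    exact Set.disjoint_left.mp hd hx.1 (heq ▸ hx).1
  have d1 : X₁ ∩ X₁' ≠ X₁ ∩ X₂' := hne h11 hdisj'
  have d2 : X₁ ∩ X₁' ≠ X₂ ∩ X₁' := hne' h11 hdisj
  have d3 : X₁ ∩ X₁' ≠ X₂ ∩ X₂' := hne' h11 hdisj
  have d4 : X₁ ∩ X₂' ≠ X₂ ∩ X₁' := hne' h12 hdisj
  have d5 : X₁ ∩ X₂' ≠ X₂ ∩ X₂' := hne' h12 hdisj
  have d6 : X₂ ∩ X₁' ≠ X₂ ∩ X₂' := hne h21 hdisj'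
  have hsub : ({X₁ ∩ X₁', X₁ ∩ X₂', X₂ ∩ X₁', X₂ ∩ X₂'} : Set (Set α)) ⊆ S := by
    rw [insert_subset_iff, insert_subset_iff, insert_subset_iff, singleton_subset_iff]
    exact ⟨⟨h11, X₁, hm1, X₁', hm1', rfl⟩, ⟨h12, X₁, hm1, X₂', hm2', rfl⟩,
      ⟨h21, X₂, hm2, X₁', hm1', rfl⟩, ⟨h22, X₂, hm2, X₂', hm2', rfl⟩⟩
  have hSfin : S.Finite := Set.finite_of_ncard_ne_zero (by rw [h3]; omega)
  have hle := Set.ncard_le_ncard hsub hSfin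
  have hc : ({X₁ ∩ X₁', X₁ ∩ X₂', X₂ ∩ X₁', X₂ ∩ X₂'} : Set (Set α)).ncard = 4 := by
    rw [Set.ncard_insert_of_notMem (by simp [d1, d2, d3]) (Set.toFinite _),
      Set.ncard_insert_of_notMem (by simp [d4, d5]) (Set.toFinite _),
      Set.ncard_insert_of_notMem (by simp [d6]) (Set.toFinite _),
      Set.ncard_singleton]
  rw [h3] at hle
  rw [hc] at hle
  omega

end CCIAux

open CCIAux

theorem stmt_8 {α : Type*} (N : Matroid α) (k : ℕ) (hk : 4 ≤ k)
    (hE : N.E.ncard = 2 * k - 2) (hr : N.rank = k - 1) (hr' : N✶.rank = k - 1)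
    (X : Set α) (hXcard : X.ncard = k)
    (hXc : N.IsCircuit₀ X) (hXcc : N.IsCocircuit₀ X)
    (J X₁ X₂ : Set α) (hJ : J ⊆ N.E \ X) (hJcard : J.ncard = k - 3)
    (hX₁₂ : X₁ ∪ X₂ = X) (hdisj : Disjoint X₁ X₂)
    (hH₁ : N.IsHyperplane (J ∪ X₁)) (hH₂ : N.IsHyperplane (J ∪ X₂))
    (J' X₁' X₂' : Set α) (hJ' : J' ⊆ N.E \ X) (hJ'card : J'.ncard = k - 3)
    (hX₁₂' : X₁' ∪ X₂' = X) (hdisj' : Disjoint X₁' X₂')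
    (hH₁' : N.IsHyperplane (J' ∪ X₁')) (hH₂' : N.IsHyperplane (J' ∪ X₂'))
    (hJJ' : J ≠ J')
    (h3 : {Z : Set α | Z.Nonempty ∧ ∃ A ∈ ({X₁, X₂} : Set (Set α)),
            ∃ B ∈ ({X₁', X₂'} : Set (Set α)), Z = A ∩ B}.ncard = 3) :
    ∀ Z ∈ {Z : Set α | Z.Nonempty ∧ ∃ A ∈ ({X₁, X₂} : Set (Set α)),
            ∃ B ∈ ({X₁', X₂'} : Set (Set α)), Z = A ∩ B}, 2 ≤ Z.ncard := by
  rintro Z ⟨hZne, A, hA, B, hB, rfl⟩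
  by_contra hlt
  push_neg at hlt
  have hfin : N.E.Finite := Set.finite_of_ncard_ne_zero (by omega)
  have hXE : X ⊆ N.E := hXc.1
  have hXfin : X.Finite := hfin.subset hXE
  have hX2X : X₂ ⊆ X := hX₁₂ ▸ subset_union_right
  have hX1X : X₁ ⊆ X := hX₁₂ ▸ subset_union_left
  have hX2'X : X₂' ⊆ X := hX₁₂' ▸ subset_union_right
  have hX1'X : X₁' ⊆ X := hX₁₂' ▸ subset_union_left
  have hAX : A ⊆ X := by
    rcases hA with rfl | hA
    · exact hX1X
    · rw [mem_singleton_iff] at hA; subst hA; exact hX2X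
  have hZfin : (A ∩ B).Finite := hXfin.subset (inter_subset_left.trans hAX)
  have hone : (A ∩ B).ncard = 1 := by
    have h0 : (A ∩ B).ncard ≠ 0 := fun h0 => hZne.ne_empty ((Set.ncard_eq_zero hZfin).mp h0)
    omega
  obtain ⟨f, hf⟩ := Set.ncard_eq_one.mp hone
  -- the symmetric swapped hypotheses
  have hX₂₁ : X₂ ∪ X₁ = X := by rw [union_comm]; exact hX₁₂
  have hX₂₁' : X₂' ∪ X₁' = X := by rw [union_comm]; exact hX₁₂'
  simp only [Set.mem_insert_iff, Set.mem_singleton_iff] at hA hB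
  rcases hA with hA | hA <;> rcases hB with hB | hB <;> rw [hA, hB] at hZne hone hf
  · -- A = X₁, B = X₁'
    by_cases h1 : X₁ ∩ X₂' = ∅
    · have hsub : X₁ ⊆ X₁' := by
        intro x hx
        rcases (hX₁₂' ▸ hX1X hx : x ∈ X₁' ∪ X₂') with h | h
        · exact h
        · exact absurd (mem_inter hx h) (by rw [h1]; exact notMem_empty x)
      have heq : X₁ ∩ X₁' = X₁ := inter_eq_self_of_subset_left hsub
      have h2 := size2 N k hk hE hr X hXcard hXc J X₂ X₁ hJ hJcard hX₂₁ hdisj.symm hH₂ hH₁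
      rw [heq] at hone
      omega
    · by_cases h2 : X₂ ∩ X₁' = ∅
      · have hsub : X₁' ⊆ X₁ := by
          intro x hx
          rcases (hX₁₂ ▸ hX1'X hx : x ∈ X₁ ∪ X₂) with h | h
          · exact h
          · exact absurd (mem_inter h hx) (by rw [h2]; exact notMem_empty x)
        have heq : X₁ ∩ X₁' = X₁' := inter_eq_self_of_subset_right hsub
        have h2' := size2 N k hk hE hr X hXcard hXc J' X₂' X₁' hJ' hJ'card hX₂₁' hdisj'.symm
          hH₂' hH₁'
        rw [heq] at hone
        omega
      · have h4 : X₂ ∩ X₂' = ∅ := by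
          by_contra h4
          exact four_blocks hdisj hdisj' h3 hZne
            (Set.nonempty_iff_ne_empty.mpr h1) (Set.nonempty_iff_ne_empty.mpr h2)
            (Set.nonempty_iff_ne_empty.mpr h4)
        exact third N k hk hE hr hr' X hXcard hXc hXcc J X₁ X₂ hJ hJcard hX₁₂ hdisj hH₁ hH₂
          J' X₁' X₂' hJ' hJ'card hX₁₂' hdisj' hH₁' hH₂' hJJ' h4 f hf
  · -- A = X₁, B = X₂'
    by_cases h1 : X₁ ∩ X₁' = ∅
    · have hsub : X₁ ⊆ X₂' := by
        intro x hx
        rcases (hX₁₂' ▸ hX1X hx : x ∈ X₁' ∪ X₂') with h | h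
        · exact absurd (mem_inter hx h) (by rw [h1]; exact notMem_empty x)
        · exact h
      have heq : X₁ ∩ X₂' = X₁ := inter_eq_self_of_subset_left hsub
      have h2 := size2 N k hk hE hr X hXcard hXc J X₂ X₁ hJ hJcard hX₂₁ hdisj.symm hH₂ hH₁
      rw [heq] at hone
      omega
    · by_cases h2 : X₂ ∩ X₂' = ∅
      · have hsub : X₂' ⊆ X₁ := by
          intro x hx
          rcases (hX₁₂ ▸ hX2'X hx : x ∈ X₁ ∪ X₂) with h | h
          · exact h
          · exact absurd (mem_inter h hx) (by rw [h2]; exact notMem_empty x)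
        have heq : X₁ ∩ X₂' = X₂' := inter_eq_self_of_subset_right hsub
        have h2' := size2 N k hk hE hr X hXcard hXc J' X₁' X₂' hJ' hJ'card hX₁₂' hdisj'
          hH₁' hH₂'
        rw [heq] at hone
        omega
      · have h4 : X₂ ∩ X₁' = ∅ := by
          by_contra h4
          exact four_blocks hdisj hdisj' h3
            (Set.nonempty_iff_ne_empty.mpr h1) hZne
            (Set.nonempty_iff_ne_empty.mpr h4) (Set.nonempty_iff_ne_empty.mpr h2)
        exact third N k hk hE hr hr' X hXcard hXc hXcc J X₁ X₂ hJ hJcard hX₁₂ hdisj hH₁ hH₂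
          J' X₂' X₁' hJ' hJ'card hX₂₁' hdisj'.symm hH₂' hH₁' hJJ' h4 f hf
  · -- A = X₂, B = X₁'
    by_cases h1 : X₂ ∩ X₂' = ∅
    · have hsub : X₂ ⊆ X₁' := by
        intro x hx
        rcases (hX₁₂' ▸ hX2X hx : x ∈ X₁' ∪ X₂') with h | h
        · exact h
        · exact absurd (mem_inter hx h) (by rw [h1]; exact notMem_empty x)
      have heq : X₂ ∩ X₁' = X₂ := inter_eq_self_of_subset_left hsub
      have h2 := size2 N k hk hE hr X hXcard hXc J X₁ X₂ hJ hJcard hX₁₂ hdisj hH₁ hH₂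
      rw [heq] at hone
      omega
    · by_cases h2 : X₁ ∩ X₁' = ∅
      · have hsub : X₁' ⊆ X₂ := by
          intro x hx
          rcases (hX₁₂ ▸ hX1'X hx : x ∈ X₁ ∪ X₂) with h | h
          · exact absurd (mem_inter h hx) (by rw [h2]; exact notMem_empty x)
          · exact h
        have heq : X₂ ∩ X₁' = X₁' := inter_eq_self_of_subset_right hsub
        have h2' := size2 N k hk hE hr X hXcard hXc J' X₂' X₁' hJ' hJ'card hX₂₁' hdisj'.symm
          hH₂' hH₁'
        rw [heq] at hone
        omega
      · have h4 : X₁ ∩ X₂' = ∅ := by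
          by_contra h4
          exact four_blocks hdisj hdisj' h3
            (Set.nonempty_iff_ne_empty.mpr h2) (Set.nonempty_iff_ne_empty.mpr h4)
            hZne (Set.nonempty_iff_ne_empty.mpr h1)
        exact third N k hk hE hr hr' X hXcard hXc hXcc J X₂ X₁ hJ hJcard hX₂₁ hdisj.symm hH₂ hH₁
          J' X₁' X₂' hJ' hJ'card hX₁₂' hdisj' hH₁' hH₂' hJJ' h4 f hf
  · -- A = X₂, B = X₂'
    by_cases h1 : X₂ ∩ X₁' = ∅
    · have hsub : X₂ ⊆ X₂' := by
        intro x hx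
        rcases (hX₁₂' ▸ hX2X hx : x ∈ X₁' ∪ X₂') with h | h
        · exact absurd (mem_inter hx h) (by rw [h1]; exact notMem_empty x)
        · exact h
      have heq : X₂ ∩ X₂' = X₂ := inter_eq_self_of_subset_left hsub
      have h2 := size2 N k hk hE hr X hXcard hXc J X₁ X₂ hJ hJcard hX₁₂ hdisj hH₁ hH₂
      rw [heq] at hone
      omega
    · by_cases h2 : X₁ ∩ X₂' = ∅
      · have hsub : X₂' ⊆ X₂ := by
          intro x hx
          rcases (hX₁₂ ▸ hX2'X hx : x ∈ X₁ ∪ X₂) with h | h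
          · exact absurd (mem_inter h hx) (by rw [h2]; exact notMem_empty x)
          · exact h
        have heq : X₂ ∩ X₂' = X₂' := inter_eq_self_of_subset_right hsub
        have h2' := size2 N k hk hE hr X hXcard hXc J' X₁' X₂' hJ' hJ'card hX₁₂' hdisj'
          hH₁' hH₂'
        rw [heq] at hone
        omega
      · have h4 : X₁ ∩ X₁' = ∅ := by
          by_contra h4
          exact four_blocks hdisj hdisj' h3
            (Set.nonempty_iff_ne_empty.mpr h4) (Set.nonempty_iff_ne_empty.mpr h2)
            (Set.nonempty_iff_ne_empty.mpr h1) hZne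
        exact third N k hk hE hr hr' X hXcard hXc hXcc J X₂ X₁ hJ hJcard hX₂₁ hdisj.symm hH₂ hH₁
          J' X₂' X₁' hJ' hJ'card hX₂₁' hdisj'.symm hH₂' hH₁' hJJ' h4 f hf
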